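/- Let N ∈ ℝ^{m×p}, R ∈ ℝ^{s×p}, and let n be a nonnegative integer. Then there exists U₂ ∈ ℝ^{m×s} with rank(U₂) ≤ n such that ‖U₂R − N‖_F ≤ ‖UR − N‖_F for every U ∈ ℝ^{m×s} with rank(U) ≤ n, and such that colspan(U₂) ⊆ colspan(N). -/

import Mathlib

open Matrix

/-- The Frobenius norm of a real matrix. -/
noncomputable def frobNorm {m n : Type*} [Fintype m] [Fintype n]
    (M : Matrix m n ℝ) : ℝ :=
  Real.sqrt (∑ i, ∑ j, (M i j) ^ 2)

/-- The column space of a real matrix: the span of its columns in `ℝ^m`. -/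
noncomputable def colSpan {m n : Type*} [Fintype m] [Fintype n]
    (M : Matrix m n ℝ) : Submodule ℝ (m → ℝ) :=
  Submodule.span ℝ (Set.range Mᵀ)

namespace Claim33

variable {m s : ℕ}

noncomputable def toE (m : ℕ) : (Fin m → ℝ) ≃ₗ[ℝ] EuclideanSpace ℝ (Fin m) :=
  (WithLp.linearEquiv 2 ℝ (Fin m → ℝ)).symm

@[simp] lemma toE_apply (x : Fin m → ℝ) (i : Fin m) : toE m x i = x i := rfl
@[simp] lemma toE_symm_apply (x : EuclideanSpace ℝ (Fin m)) (i : Fin m) :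
    (toE m).symm x i = x i := rfl

noncomputable def projMat (V : Submodule ℝ (EuclideanSpace ℝ (Fin m))) :
    Matrix (Fin m) (Fin m) ℝ :=
  LinearMap.toMatrix' ((toE m).symm.toLinearMap ∘ₗ
    (V.subtype ∘ₗ (V.orthogonalProjectionOnto).toLinearMap) ∘ₗ (toE m).toLinearMap)

lemma projMat_mulVec (V : Submodule ℝ (EuclideanSpace ℝ (Fin m))) (x : Fin m → ℝ) :
    projMat V *ᵥ x = (toE m).symm (V.orthogonalProjectionOnto (toE m x)) := by
  rw [projMat, ← Matrix.toLin'_apply, Matrix.toLin'_toMatrix']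
  rfl

lemma toE_projMat_mulVec_mem (V : Submodule ℝ (EuclideanSpace ℝ (Fin m))) (x : Fin m → ℝ) :
    toE m (projMat V *ᵥ x) ∈ V := by
  rw [projMat_mulVec, LinearEquiv.apply_symm_apply]
  exact (V.orthogonalProjectionOnto (toE m x)).2

lemma projMat_mulVec_of_mem {V : Submodule ℝ (EuclideanSpace ℝ (Fin m))} {x : Fin m → ℝ}
    (h : toE m x ∈ V) : projMat V *ᵥ x = x := by
  rw [projMat_mulVec, show ((V.orthogonalProjectionOnto (toE m x) : EuclideanSpace ℝ (Fin m))) = toE m x from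
    Submodule.starProjection_eq_self_iff.mpr h, LinearEquiv.symm_apply_apply]

lemma norm_sq_eq (y : EuclideanSpace ℝ (Fin m)) : ‖y‖ ^ 2 = ∑ i, y i ^ 2 := by
  rw [EuclideanSpace.norm_eq, Real.sq_sqrt (by positivity)]
  simp [sq_abs]

lemma abs_coord_le_norm (y : EuclideanSpace ℝ (Fin m)) (i : Fin m) : |y i| ≤ ‖y‖ := by
  have h1 : y i ^ 2 ≤ ‖y‖ ^ 2 := by
    rw [norm_sq_eq]
    exact Finset.single_le_sum (f := fun i => y i ^ 2) (fun j _ => sq_nonneg _)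
      (Finset.mem_univ i)
  calc |y i| = Real.sqrt (y i ^ 2) := (Real.sqrt_sq_eq_abs _).symm
    _ ≤ Real.sqrt (‖y‖ ^ 2) := Real.sqrt_le_sqrt h1
    _ = ‖y‖ := by rw [Real.sqrt_sq (norm_nonneg _)]

lemma sum_sq_projMat_mulVec_le (V : Submodule ℝ (EuclideanSpace ℝ (Fin m))) (x : Fin m → ℝ) :
    ∑ i, (projMat V *ᵥ x) i ^ 2 ≤ ∑ i, x i ^ 2 := by
  have h1 : ‖(V.orthogonalProjectionOnto (toE m x) : EuclideanSpace ℝ (Fin m))‖ ≤ ‖toE m x‖ := by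
    calc ‖(V.orthogonalProjectionOnto (toE m x) : EuclideanSpace ℝ (Fin m))‖
        = ‖V.orthogonalProjectionOnto (toE m x)‖ := rfl
      _ ≤ ‖V.orthogonalProjectionOnto‖ * ‖toE m x‖ := (V.orthogonalProjectionOnto).le_opNorm _
      _ ≤ 1 * ‖toE m x‖ := by
          exact mul_le_mul_of_nonneg_right (V.orthogonalProjectionOnto_norm_le) (norm_nonneg _)
      _ = ‖toE m x‖ := one_mul _
  have h2 : ∑ i, (projMat V *ᵥ x) i ^ 2
      = ‖(V.orthogonalProjectionOnto (toE m x) : EuclideanSpace ℝ (Fin m))‖ ^ 2 := by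
    rw [norm_sq_eq]
    refine Finset.sum_congr rfl fun i _ => ?_
    rw [projMat_mulVec]
    rfl
  have h3 : ∑ i, x i ^ 2 = ‖toE m x‖ ^ 2 := by
    rw [norm_sq_eq]; rfl
  rw [h2, h3]
  exact pow_le_pow_left₀ (norm_nonneg _) h1 2


section Frob

variable {a b : Type*} [Fintype a] [Fintype b]

lemma frobNorm_nonneg (M : Matrix a b ℝ) : 0 ≤ frobNorm M := Real.sqrt_nonneg _

lemma frobNorm_le_frobNorm {M M' : Matrix a b ℝ}
    (h : ∑ i, ∑ j, M i j ^ 2 ≤ ∑ i, ∑ j, M' i j ^ 2) : frobNorm M ≤ frobNorm M' :=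
  Real.sqrt_le_sqrt h

lemma abs_entry_le_frobNorm (M : Matrix a b ℝ) (i : a) (j : b) : |M i j| ≤ frobNorm M := by
  have h1 : M i j ^ 2 ≤ ∑ i', ∑ j', M i' j' ^ 2 := by
    calc M i j ^ 2 ≤ ∑ j', M i j' ^ 2 :=
          Finset.single_le_sum (f := fun j' => M i j' ^ 2) (fun _ _ => sq_nonneg _)
            (Finset.mem_univ j)
      _ ≤ ∑ i', ∑ j', M i' j' ^ 2 :=
          Finset.single_le_sum (f := fun i' => ∑ j', M i' j' ^ 2)
            (fun _ _ => Finset.sum_nonneg fun _ _ => sq_nonneg _) (Finset.mem_univ i)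
  calc |M i j| = Real.sqrt (M i j ^ 2) := (Real.sqrt_sq_eq_abs _).symm
    _ ≤ frobNorm M := Real.sqrt_le_sqrt h1

lemma frobNorm_neg (M : Matrix a b ℝ) : frobNorm (-M) = frobNorm M := by
  unfold frobNorm; congr 1; refine Finset.sum_congr rfl fun i _ => ?_
  refine Finset.sum_congr rfl fun j _ => ?_
  simp

end Frob

lemma col_projMat_mul {k : ℕ} (V : Submodule ℝ (EuclideanSpace ℝ (Fin m)))
    (M : Matrix (Fin m) (Fin k) ℝ) (j : Fin k) :
    (fun i => (projMat V * M) i j) = projMat V *ᵥ (fun i => M i j) := by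
  ext i
  simp [Matrix.mul_apply, Matrix.mulVec, dotProduct]

lemma frobNorm_projMat_mul_le {k : ℕ} (V : Submodule ℝ (EuclideanSpace ℝ (Fin m)))
    (M : Matrix (Fin m) (Fin k) ℝ) : frobNorm (projMat V * M) ≤ frobNorm M := by
  apply frobNorm_le_frobNorm
  rw [Finset.sum_comm, Finset.sum_comm (γ := Fin m)]
  refine Finset.sum_le_sum fun j _ => ?_
  have := sum_sq_projMat_mulVec_le V (fun i => M i j)
  calc ∑ i, (projMat V * M) i j ^ 2 = ∑ i, (projMat V *ᵥ fun i => M i j) i ^ 2 := by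
        refine Finset.sum_congr rfl fun i _ => ?_
        rw [congrFun (col_projMat_mul V M j) i]
    _ ≤ ∑ i, M i j ^ 2 := this

lemma col_mem_colSpan {a b : Type*} [Fintype a] [Fintype b] (M : Matrix a b ℝ) (j : b) :
    (fun i => M i j) ∈ colSpan M := by
  apply Submodule.subset_span
  exact ⟨j, rfl⟩

lemma projMat_mul_self {k : ℕ} (M : Matrix (Fin m) (Fin k) ℝ)
    (h : ∀ j, (fun i => M i j) ∈ colSpan M) :
    projMat ((colSpan M).map (toE m).toLinearMap) * M = M := by
  ext i j
  have h2 : toE m (fun i => M i j) ∈ (colSpan M).map (toE m).toLinearMap :=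
    Submodule.mem_map_of_mem (h j)
  have h3 := projMat_mulVec_of_mem h2
  calc (projMat ((colSpan M).map (toE m).toLinearMap) * M) i j
      = (projMat ((colSpan M).map (toE m).toLinearMap) *ᵥ fun i => M i j) i :=
        congrFun (col_projMat_mul _ M j) i
    _ = M i j := by rw [h3]

lemma projMat_fix {k : ℕ} (V : Submodule ℝ (EuclideanSpace ℝ (Fin m)))
    (M : Matrix (Fin m) (Fin k) ℝ) (h : ∀ j, toE m (fun i => M i j) ∈ V) :
    projMat V * M = M := by
  ext i j
  calc (projMat V * M) i j = (projMat V *ᵥ fun i => M i j) i :=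
        congrFun (col_projMat_mul _ M j) i
    _ = M i j := by rw [projMat_mulVec_of_mem (h j)]

lemma colSpan_projMat_mul_le {a : Type*} [Fintype a] {k : ℕ}
    (Nm : Matrix (Fin m) a ℝ) (M : Matrix (Fin m) (Fin k) ℝ) :
    colSpan (projMat ((colSpan Nm).map (toE m).toLinearMap) * M) ≤ colSpan Nm := by
  rw [colSpan, Submodule.span_le]
  rintro x ⟨j, rfl⟩
  have hx : (projMat ((colSpan Nm).map (toE m).toLinearMap) * M)ᵀ j
      = projMat ((colSpan Nm).map (toE m).toLinearMap) *ᵥ (fun i => M i j) := by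
    ext i
    exact congrFun (col_projMat_mul _ M j) i
  rw [hx]
  have h1 := toE_projMat_mulVec_mem ((colSpan Nm).map (toE m).toLinearMap) (fun i => M i j)
  rcases h1 with ⟨y, hy, hyy⟩
  have : y = projMat ((colSpan Nm).map (toE m).toLinearMap) *ᵥ (fun i => M i j) := by
    have := congrArg (toE m).symm hyy
    rwa [LinearEquiv.coe_coe, LinearEquiv.symm_apply_apply, LinearEquiv.symm_apply_apply] at this
  rwa [← this]


lemma colSpan_def {a b : Type*} [Fintype a] [Fintype b] (M : Matrix a b ℝ) :
    colSpan M = Submodule.span ℝ (Set.range Mᵀ) := rfl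

lemma projMat_mul_mul {k : ℕ} (V : Submodule ℝ (EuclideanSpace ℝ (Fin m)))
    (M : Matrix (Fin m) (Fin k) ℝ) :
    projMat V * (projMat V * M) = projMat V * M := by
  apply projMat_fix
  intro j
  have h := col_projMat_mul V M j
  rw [h]
  exact toE_projMat_mulVec_mem V _

lemma finrank_colSpan_map {a : Type*} [Fintype a] (U' : Matrix (Fin m) a ℝ) :
    Module.finrank ℝ ((colSpan U').map (toE m).toLinearMap) = U'.rank := by
  have h0 : (colSpan U').map (toE m).toLinearMap
      = (colSpan U').map ((toE m : (Fin m → ℝ) →ₗ[ℝ] EuclideanSpace ℝ (Fin m))) := rfl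
  rw [h0, LinearEquiv.finrank_map_eq, colSpan_def, Matrix.rank_eq_finrank_span_cols]; rfl

lemma exists_factor {n : ℕ} (U' : Matrix (Fin m) (Fin s) ℝ) (hrank : U'.rank ≤ n) :
    ∃ A : Matrix (Fin m) (Fin n) ℝ, (∀ i j, |A i j| ≤ 1) ∧ A * (Aᵀ * U') = U' := by
  classical
  set V : Submodule ℝ (EuclideanSpace ℝ (Fin m)) := (colSpan U').map (toE m).toLinearMap with hV
  have hr : Module.finrank ℝ V ≤ n := by rw [hV, finrank_colSpan_map]; exact hrank
  set r := Module.finrank ℝ V with hrdef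
  let b : OrthonormalBasis (Fin r) ℝ V := stdOrthonormalBasis ℝ V
  set A : Matrix (Fin m) (Fin n) ℝ := fun i j =>
    if h : (j : ℕ) < r then ((b ⟨j, h⟩ : EuclideanSpace ℝ (Fin m)) i) else 0 with hA
  have hnorm : ∀ jr : Fin r, ‖(b jr : EuclideanSpace ℝ (Fin m))‖ = 1 := by
    intro jr
    rw [Submodule.norm_coe]
    exact b.orthonormal.1 jr
  refine ⟨A, ?_, ?_⟩
  · intro i j
    rw [hA]
    dsimp only
    split
    · rename_i h
      calc |(b ⟨j, h⟩ : EuclideanSpace ℝ (Fin m)) i|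
          ≤ ‖(b ⟨j, h⟩ : EuclideanSpace ℝ (Fin m))‖ := abs_coord_le_norm _ i
        _ = 1 := hnorm _
    · simp
  · ext i k
    have hc : toE m (fun i' => U' i' k) ∈ V := Submodule.mem_map_of_mem (col_mem_colSpan U' k)
    set cV : V := ⟨toE m (fun i' => U' i' k), hc⟩ with hcV
    have hrepr := b.sum_repr' cV
    have hrepr2 : ∑ jr : Fin r, (inner ℝ (b jr) cV : ℝ) • ((b jr : EuclideanSpace ℝ (Fin m)))
        = toE m (fun i' => U' i' k) := by
      have h4 := congrArg (Submodule.subtype V) hrepr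
      rw [map_sum] at h4
      simpa using h4
    have hrepr3 : ∀ i' : Fin m,
        ∑ jr : Fin r, (inner ℝ (b jr) cV : ℝ) * ((b jr : EuclideanSpace ℝ (Fin m)) i')
          = U' i' k := by
      intro i'
      have h4 := congrArg (toE m).symm hrepr2
      rw [map_sum, LinearEquiv.symm_apply_apply] at h4
      have h5 := congrFun h4 i'
      rw [Finset.sum_apply] at h5
      rw [← h5]
      rfl
    have hinner : ∀ jr : Fin r, (inner ℝ (b jr) cV : ℝ)
        = ∑ l, (b jr : EuclideanSpace ℝ (Fin m)) l * U' l k := by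
      intro jr
      rw [Submodule.coe_inner, PiLp.inner_apply]
      simp [RCLike.inner_apply]
      exact Finset.sum_congr rfl fun l _ => mul_comm _ _
    -- now compute the matrix product entry
    have hmul : (A * (Aᵀ * U')) i k = ∑ j : Fin n, A i j * (∑ l, A l j * U' l k) := by
      rw [Matrix.mul_apply]
      refine Finset.sum_congr rfl fun j _ => ?_
      rw [Matrix.mul_apply]
      simp [Matrix.transpose_apply]
    set g : ℕ → ℝ := fun jj =>
      if h : jj < r then ((b ⟨jj, h⟩ : EuclideanSpace ℝ (Fin m)) i)
        * (∑ l, (b ⟨jj, h⟩ : EuclideanSpace ℝ (Fin m)) l * U' l k) else 0 with hg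
    have hstep1 : ∀ j : Fin n, A i j * (∑ l, A l j * U' l k) = g j := by
      intro j
      by_cases h : (j : ℕ) < r
      · rw [hg, hA]
        dsimp only
        rw [dif_pos h, dif_pos h]
        congr 1
        refine Finset.sum_congr rfl fun l _ => ?_
        rw [dif_pos h]
      · rw [hg, hA]
        dsimp only
        rw [dif_neg h, dif_neg h, zero_mul]
    have hgsum : ∑ j : Fin n, g (j : ℕ) = ∑ jr : Fin r, g (jr : ℕ) := by
      rw [Fin.sum_univ_eq_sum_range (fun jj => g jj) n,
        Fin.sum_univ_eq_sum_range (fun jj => g jj) r]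
      refine (Finset.sum_subset (Finset.range_subset_range.2 hr) ?_).symm
      intro x _ hx
      rw [hg]
      dsimp only
      rw [dif_neg (by simpa using hx)]
    have hstep3 : ∀ jr : Fin r, g (jr : ℕ) = ((b jr : EuclideanSpace ℝ (Fin m)) i)
        * (∑ l, (b jr : EuclideanSpace ℝ (Fin m)) l * U' l k) := by
      intro jr
      rw [hg]
      dsimp only
      rw [dif_pos jr.2]
    calc (A * (Aᵀ * U')) i k = ∑ j : Fin n, A i j * (∑ l, A l j * U' l k) := hmul
      _ = ∑ j : Fin n, g (j : ℕ) := Finset.sum_congr rfl fun j _ => hstep1 j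
      _ = ∑ jr : Fin r, g (jr : ℕ) := hgsum
      _ = ∑ jr : Fin r, ((b jr : EuclideanSpace ℝ (Fin m)) i)
            * (∑ l, (b jr : EuclideanSpace ℝ (Fin m)) l * U' l k) :=
          Finset.sum_congr rfl fun jr _ => hstep3 jr
      _ = ∑ jr : Fin r, (inner ℝ (b jr) cV : ℝ) * ((b jr : EuclideanSpace ℝ (Fin m)) i) := by
          refine Finset.sum_congr rfl fun jr _ => ?_
          rw [hinner jr, mul_comm]
      _ = U' i k := hrepr3 i

lemma exists_W (p : ℕ) (R : Matrix (Fin s) (Fin p) ℝ) :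
    ∃ W : Matrix (Fin p) (Fin s) ℝ,
      R * W = projMat ((colSpan R).map (toE s).toLinearMap) := by
  classical
  set Q := projMat ((colSpan R).map (toE s).toLinearMap) with hQ
  have hcol : ∀ k : Fin s, (fun i => Q i k) ∈ colSpan R := by
    intro k
    have h1 := toE_projMat_mulVec_mem ((colSpan R).map (toE s).toLinearMap) (Pi.single k 1)
    have h2 : Q *ᵥ Pi.single k 1 = fun i => Q i k := by
      ext i
      rw [Matrix.mulVec_single]
      simp
    rw [h2] at h1
    rcases h1 with ⟨y, hy, hyy⟩
    have h3 : y = fun i => Q i k := by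
      have h4 := congrArg (toE s).symm hyy
      rwa [LinearEquiv.coe_coe, LinearEquiv.symm_apply_apply, LinearEquiv.symm_apply_apply] at h4
    rwa [← h3]
  have hcol' : ∀ k : Fin s, ∃ c : Fin p → ℝ, ∑ j, c j • Rᵀ j = fun i => Q i k := by
    intro k
    exact (Submodule.mem_span_range_iff_exists_fun ℝ).mp (by rw [← colSpan_def]; exact hcol k)
  choose c hc using hcol'
  refine ⟨Matrix.of fun j k => c k j, ?_⟩
  ext i k
  rw [Matrix.mul_apply]
  have h5 := congrFun (hc k) i
  rw [Finset.sum_apply] at h5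
  simp only [Pi.smul_apply, smul_eq_mul, Matrix.transpose_apply] at h5
  rw [← h5]
  exact Finset.sum_congr rfl fun j _ => mul_comm _ _

end Claim33

open Claim33 in
/-- Claim 3.3: the rank-`n`-constrained minimizer of `U ↦ ‖UR − N‖_F` can be taken to
lie in the column span of `N`. -/
theorem rank_constrained_minimizer_in_colspan
    (m p s : ℕ) (n : ℕ)
    (N : Matrix (Fin m) (Fin p) ℝ) (R : Matrix (Fin s) (Fin p) ℝ) :
    ∃ U₂ : Matrix (Fin m) (Fin s) ℝ, U₂.rank ≤ n ∧
      (∀ U : Matrix (Fin m) (Fin s) ℝ, U.rank ≤ n →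
        frobNorm (U₂ * R - N) ≤ frobNorm (U * R - N)) ∧
      colSpan U₂ ≤ colSpan N := by
  classical
  set P := projMat ((colSpan N).map (toE m).toLinearMap) with hP
  set Q := projMat ((colSpan R).map (toE s).toLinearMap) with hQdef
  obtain ⟨W, hW⟩ := exists_W (s := s) p R
  rw [← hQdef] at hW
  set SW : ℝ := ∑ j, ∑ k, |W j k| with hSW
  have hSWnn : 0 ≤ SW := Finset.sum_nonneg fun _ _ => Finset.sum_nonneg fun _ _ => abs_nonneg _
  have hfNnn : (0:ℝ) ≤ frobNorm N := frobNorm_nonneg N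
  set CB : ℝ := m * (2 * frobNorm N * SW) with hCB
  have hCBnn : 0 ≤ CB := by positivity
  set K : Set (Matrix (Fin m) (Fin n) ℝ × Matrix (Fin n) (Fin s) ℝ) :=
    {AB | (∀ i j, |AB.1 i j| ≤ 1) ∧ (∀ i j, |AB.2 i j| ≤ CB)} with hK
  -- compactness of K
  have hK1 : IsCompact {A : Matrix (Fin m) (Fin n) ℝ | ∀ i j, |A i j| ≤ 1} := by
    have he : {A : Matrix (Fin m) (Fin n) ℝ | ∀ i j, |A i j| ≤ 1}
        = Set.univ.pi fun _ : Fin m => Set.univ.pi fun _ : Fin n => Set.Icc (-1:ℝ) 1 := by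
      ext X
      constructor
      · intro h
        intro i _
        intro j _
        exact abs_le.mp (h i j)
      · intro h i j
        exact abs_le.mpr (h i (Set.mem_univ i) j (Set.mem_univ j))
    rw [he]
    exact isCompact_univ_pi fun _ => isCompact_univ_pi fun _ => isCompact_Icc
  have hK2 : IsCompact {B : Matrix (Fin n) (Fin s) ℝ | ∀ i j, |B i j| ≤ CB} := by
    have he : {B : Matrix (Fin n) (Fin s) ℝ | ∀ i j, |B i j| ≤ CB}
        = Set.univ.pi fun _ : Fin n => Set.univ.pi fun _ : Fin s => Set.Icc (-CB) CB := by
      ext X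
      constructor
      · intro h
        intro i _
        intro j _
        exact abs_le.mp (h i j)
      · intro h i j
        exact abs_le.mpr (h i (Set.mem_univ i) j (Set.mem_univ j))
    rw [he]
    exact isCompact_univ_pi fun _ => isCompact_univ_pi fun _ => isCompact_Icc
  have hKc : IsCompact K := by
    have he : K = {A : Matrix (Fin m) (Fin n) ℝ | ∀ i j, |A i j| ≤ 1} ×ˢ
        {B : Matrix (Fin n) (Fin s) ℝ | ∀ i j, |B i j| ≤ CB} := by
      ext AB
      simp [hK, Set.mem_prod]
    rw [he]
    exact hK1.prod hK2
  have hKne : K.Nonempty := by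
    refine ⟨(0, 0), ?_, ?_⟩ <;> intro i j <;> simp [hCBnn]
  -- the objective function
  set f : Matrix (Fin m) (Fin n) ℝ × Matrix (Fin n) (Fin s) ℝ → ℝ :=
    fun AB => frobNorm (P * AB.1 * AB.2 * R - N) with hf
  have hfc : Continuous f := by
    have hM : Continuous fun AB : Matrix (Fin m) (Fin n) ℝ × Matrix (Fin n) (Fin s) ℝ =>
        P * AB.1 * AB.2 * R - N := by
      exact (((continuous_const.matrix_mul continuous_fst).matrix_mul
        continuous_snd).matrix_mul continuous_const).sub continuous_const
    rw [hf]
    unfold frobNorm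
    apply Real.continuous_sqrt.comp
    apply continuous_finset_sum
    intro i _
    apply continuous_finset_sum
    intro j _
    exact (hM.matrix_elem i j).pow 2
  obtain ⟨AB₀, hAB₀, hmin⟩ := hKc.exists_isMinOn hKne hfc.continuousOn
  refine ⟨P * AB₀.1 * AB₀.2, ?_, ?_, ?_⟩
  · -- rank bound
    calc (P * AB₀.1 * AB₀.2).rank ≤ (P * AB₀.1).rank := Matrix.rank_mul_le_left _ _
      _ ≤ Fintype.card (Fin n) := Matrix.rank_le_card_width _
      _ = n := Fintype.card_fin n
  · -- minimality
    intro U hU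
    rcases le_total (frobNorm N) (frobNorm (U * R - N)) with hcase | hcase
    · have h00 : ((0 : Matrix (Fin m) (Fin n) ℝ), (0 : Matrix (Fin n) (Fin s) ℝ)) ∈ K := by
        refine ⟨?_, ?_⟩ <;> intro i j <;> simp [hCBnn]
      have h1 : f AB₀ ≤ f (0, 0) := isMinOn_iff.mp hmin _ h00
      have h2 : f (0, 0) = frobNorm N := by
        rw [hf]
        simp only [Matrix.mul_zero, Matrix.zero_mul, zero_sub]
        exact frobNorm_neg N
      calc frobNorm (P * AB₀.1 * AB₀.2 * R - N) = f AB₀ := rfl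
        _ ≤ frobNorm N := h2 ▸ h1
        _ ≤ frobNorm (U * R - N) := hcase
    · -- the interesting case
      set U' := P * U * Q with hU'
      have hQR : Q * R = R := projMat_mul_self R (fun j => col_mem_colSpan R j)
      have hPN : P * N = N := projMat_mul_self N (fun j => col_mem_colSpan N j)
      have hU'R : U' * R = P * (U * R) := by
        rw [hU', Matrix.mul_assoc (P * U) Q R, hQR, Matrix.mul_assoc]
      have hdiff : U' * R - N = P * (U * R - N) := by
        rw [Matrix.mul_sub, hPN, hU'R]
      have hfle : frobNorm (U' * R - N) ≤ frobNorm (U * R - N) := by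
        rw [hdiff]
        exact frobNorm_projMat_mul_le _ _
      have hrankU' : U'.rank ≤ n := by
        calc U'.rank ≤ (P * U).rank := Matrix.rank_mul_le_left _ _
          _ ≤ U.rank := Matrix.rank_mul_le_right _ _
          _ ≤ n := hU
      have hQQ : Q * Q = Q := by
        have h3 := projMat_mul_mul ((colSpan R).map (toE s).toLinearMap) (1 : Matrix (Fin s) (Fin s) ℝ)
        rw [← hQdef, Matrix.mul_one] at h3
        exact h3
      have hU'Q : U' * Q = U' := by
        rw [hU', Matrix.mul_assoc (P * U) Q Q, hQQ]
      have hU'W : (U' * R) * W = U' := by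
        rw [Matrix.mul_assoc, hW, hU'Q]
      have hPU' : P * U' = U' := by
        have h3 := projMat_mul_mul ((colSpan N).map (toE m).toLinearMap) (U * Q)
        rw [← hP] at h3
        rw [hU', Matrix.mul_assoc P U Q]
        exact h3
      have hUR_entry : ∀ i j, |(U' * R) i j| ≤ 2 * frobNorm N := by
        intro i j
        have h1 : |(U' * R - N) i j| ≤ frobNorm (U' * R - N) := abs_entry_le_frobNorm _ i j
        have h2 : |N i j| ≤ frobNorm N := abs_entry_le_frobNorm N i j
        have h3 : frobNorm (U' * R - N) ≤ frobNorm N := le_trans hfle hcase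
        have h4 : (U' * R) i j = (U' * R - N) i j + N i j := by
          simp [Matrix.sub_apply]
        calc |(U' * R) i j| = |(U' * R - N) i j + N i j| := by rw [h4]
          _ ≤ |(U' * R - N) i j| + |N i j| := abs_add_le _ _
          _ ≤ frobNorm N + frobNorm N := add_le_add (h1.trans h3) h2
          _ = 2 * frobNorm N := by ring
      have hU'entry : ∀ i k, |U' i k| ≤ 2 * frobNorm N * SW := by
        intro i k
        have h5 : U' i k = ∑ j, (U' * R) i j * W j k := by
          conv_lhs => rw [← hU'W]
          rw [Matrix.mul_apply]
        rw [h5]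
        calc |∑ j, (U' * R) i j * W j k| ≤ ∑ j, |(U' * R) i j * W j k| :=
              Finset.abs_sum_le_sum_abs _ _
          _ ≤ ∑ j, 2 * frobNorm N * |W j k| := by
              refine Finset.sum_le_sum fun j _ => ?_
              rw [abs_mul]
              exact mul_le_mul_of_nonneg_right (hUR_entry i j) (abs_nonneg _)
          _ = 2 * frobNorm N * ∑ j, |W j k| := by rw [Finset.mul_sum]
          _ ≤ 2 * frobNorm N * SW := by
              refine mul_le_mul_of_nonneg_left ?_ (by positivity)
              rw [hSW]
              refine Finset.sum_le_sum fun j _ => ?_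
              exact Finset.single_le_sum (f := fun k' => |W j k'|)
                (fun _ _ => abs_nonneg _) (Finset.mem_univ k)
      obtain ⟨A, hAbd, hAfac⟩ := exists_factor U' hrankU'
      set B := Aᵀ * U' with hB
      have hBentry : ∀ j k, |B j k| ≤ CB := by
        intro j k
        have h5 : B j k = ∑ i, A i j * U' i k := by
          rw [hB, Matrix.mul_apply]
          exact Finset.sum_congr rfl fun i _ => by rw [Matrix.transpose_apply]
        rw [h5]
        calc |∑ i, A i j * U' i k| ≤ ∑ i, |A i j * U' i k| := Finset.abs_sum_le_sum_abs _ _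
          _ ≤ ∑ _i : Fin m, 2 * frobNorm N * SW := by
              refine Finset.sum_le_sum fun i _ => ?_
              rw [abs_mul]
              calc |A i j| * |U' i k| ≤ 1 * (2 * frobNorm N * SW) :=
                    mul_le_mul (hAbd i j) (hU'entry i k) (abs_nonneg _) zero_le_one
                _ = 2 * frobNorm N * SW := one_mul _
          _ = CB := by
              rw [Finset.sum_const, Finset.card_univ, Fintype.card_fin, nsmul_eq_mul, hCB]
      have hABK : (A, B) ∈ K := ⟨hAbd, hBentry⟩
      have hPAB : P * A * B = U' := by
        rw [Matrix.mul_assoc, hB, hAfac, hPU']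
      have h1 : f AB₀ ≤ f (A, B) := isMinOn_iff.mp hmin _ hABK
      have h2 : f (A, B) = frobNorm (U' * R - N) := by
        rw [hf]
        dsimp only
        rw [hPAB]
      calc frobNorm (P * AB₀.1 * AB₀.2 * R - N) = f AB₀ := rfl
        _ ≤ frobNorm (U' * R - N) := h2 ▸ h1
        _ ≤ frobNorm (U * R - N) := hfle
  · -- column span
    rw [Matrix.mul_assoc]
    exact colSpan_projMat_mul_le N (AB₀.1 * AB₀.2)
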